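/- Let X be a metric space, n ∈ ℕ, and let σ : Fin (n+1) → X and t : Fin (n+1) → ℝ satisfy dist(σ i, σ j) = |t i − t j| for all i, j (σ is a shortest path whose i-th vertex lies at arc-length position t i). Then for every u ∈ X and every ε > 0 there exists a subset A of Fin (n+1) with (|A| : ℝ) ≤ 4/ε + 1 such that for every index j: dist(u, σ j) ≤ min over i ∈ A of (dist(u, σ i) + dist(σ i, σ j)) ≤ (1 + ε) · dist(u, σ j). -/

import Mathlib

open scoped Classical in
/-- Greedy anchor selection: scan the list, keep current anchor `c`;
whenever the next point is not covered by `c`, make it the new anchor. -/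
noncomputable def greedyAnchors {ι : Type*} (covers : ι → ι → Prop) :
    ι → List ι → List ι
  | _, [] => []
  | c, j :: rest =>
    if covers c j then greedyAnchors covers c rest
    else j :: greedyAnchors covers j rest

lemma greedyAnchors_cover {ι : Type*} (covers : ι → ι → Prop)
    (hself : ∀ j, covers j j) :
    ∀ (L : List ι) (c j : ι), j ∈ L →
      ∃ a, (a = c ∨ a ∈ greedyAnchors covers c L) ∧ covers a j := by
  classical
  intro L
  induction L with
  | nil => intro c j hj; simp at hj
  | cons x rest ih =>
    intro c j hj
    rw [greedyAnchors]
    by_cases hc : covers c x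
    · rw [if_pos hc]
      rcases List.mem_cons.mp hj with rfl | hj'
      · exact ⟨c, Or.inl rfl, hc⟩
      · exact ih c j hj'
    · rw [if_neg hc]
      rcases List.mem_cons.mp hj with rfl | hj'
      · exact ⟨j, Or.inr (List.mem_cons_self), hself j⟩
      · obtain ⟨a, ha, hcov⟩ := ih x j hj'
        rcases ha with rfl | ha
        · exact ⟨a, Or.inr (List.mem_cons_self), hcov⟩
        · exact ⟨a, Or.inr (List.mem_cons_of_mem _ ha), hcov⟩

/-- The key counting lemma: along the greedy anchors, the potential
`i ↦ dist u (σ i) - t i` drops by at least `ε * D` at each new anchor. -/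
lemma greedyAnchors_count {X : Type*} [MetricSpace X] {n : ℕ}
    (σ : Fin (n + 1) → X) (t : Fin (n + 1) → ℝ)
    (hσ : ∀ i j, dist (σ i) (σ j) = |t i - t j|)
    (u : X) (ε : ℝ) (hε : 0 < ε) (m : Fin (n + 1))
    (hmin : ∀ i, dist u (σ m) ≤ dist u (σ i)) :
    ∀ (L : List (Fin (n + 1))) (c : Fin (n + 1)),
      (∀ x ∈ L, t c ≤ t x) →
      L.Pairwise (fun a b => t a ≤ t b) →
      ε * dist u (σ m) *
        (greedyAnchors (fun a b => dist u (σ a) + dist (σ a) (σ b)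
            ≤ (1 + ε) * dist u (σ b)) c L).length
        ≤ dist u (σ c) - t c + t m + dist u (σ m) := by
  classical
  intro L
  induction L with
  | nil =>
    intro c _ _
    rw [greedyAnchors]
    simp only [List.length_nil, Nat.cast_zero, mul_zero]
    have h1 : dist (σ m) (σ c) ≤ dist (σ m) u + dist u (σ c) := dist_triangle _ _ _
    have h2 : t c - t m ≤ |t m - t c| := by
      rw [abs_sub_comm]; exact le_abs_self _
    rw [← hσ m c] at h2
    have h3 : dist (σ m) u = dist u (σ m) := dist_comm _ _
    linarith
  | cons j rest ih =>
    intro c hc hpair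
    rw [greedyAnchors]
    have hcj : t c ≤ t j := hc j (List.mem_cons_self)
    have hrest_pair : rest.Pairwise (fun a b => t a ≤ t b) :=
      (List.pairwise_cons.mp hpair).2
    have hjrest : ∀ x ∈ rest, t j ≤ t x := (List.pairwise_cons.mp hpair).1
    by_cases hcov : dist u (σ c) + dist (σ c) (σ j) ≤ (1 + ε) * dist u (σ j)
    · rw [if_pos hcov]
      exact ih c (fun x hx => hc x (List.mem_cons_of_mem _ hx)) hrest_pair
    · rw [if_neg hcov]
      have ihj := ih j hjrest hrest_pair
      rw [List.length_cons]
      push_cast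
      have hdist : dist (σ c) (σ j) = t j - t c := by
        rw [hσ c j, abs_sub_comm, abs_of_nonneg (by linarith)]
      have hDj : dist u (σ m) ≤ dist u (σ j) := hmin j
      have hkey : ε * dist u (σ m) + (dist u (σ j) - t j)
          ≤ dist u (σ c) - t c := by
        push_neg at hcov
        rw [hdist] at hcov
        nlinarith
      rw [mul_add, mul_one]
      linarith

theorem discrete_anchor_points
    {X : Type*} [MetricSpace X]
    (n : ℕ) (σ : Fin (n + 1) → X) (t : Fin (n + 1) → ℝ)
    (hσ : ∀ i j, dist (σ i) (σ j) = |t i - t j|)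
    (u : X) (ε : ℝ) (hε : 0 < ε) :
    ∃ A : Finset (Fin (n + 1)), (A.card : ℝ) ≤ 4 / ε + 1 ∧
      ∀ j : Fin (n + 1),
        (∀ i ∈ A, dist u (σ j) ≤ dist u (σ i) + dist (σ i) (σ j)) ∧
        ∃ i ∈ A, dist u (σ i) + dist (σ i) (σ j) ≤ (1 + ε) * dist u (σ j) := by
  classical
  obtain ⟨m, -, hmin'⟩ := Finset.exists_min_image Finset.univ
    (fun i => dist u (σ i)) ⟨0, Finset.mem_univ 0⟩
  have hmin : ∀ i, dist u (σ m) ≤ dist u (σ i) := fun i => hmin' i (Finset.mem_univ i)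
  set D := dist u (σ m) with hD
  set covers : Fin (n + 1) → Fin (n + 1) → Prop :=
    fun a b => dist u (σ a) + dist (σ a) (σ b) ≤ (1 + ε) * dist u (σ b) with hcovers
  have hself : ∀ j, covers j j := by
    intro j
    simp only [covers, dist_self, add_zero]
    nlinarith [dist_nonneg (x := u) (y := σ j)]
  have hε4 : (0:ℝ) < 4 / ε := by positivity
  by_cases hD0 : D = 0
  · -- u is on the path: the single anchor m suffices.
    refine ⟨{m}, ?_, ?_⟩
    · simp only [Finset.card_singleton, Nat.cast_one]; linarith
    · intro j
      refine ⟨fun i _ => dist_triangle _ _ _, m, Finset.mem_singleton_self m, ?_⟩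
      have h1 : dist (σ m) (σ j) ≤ dist (σ m) u + dist u (σ j) := dist_triangle _ _ _
      have h2 : dist (σ m) u = D := by rw [dist_comm]
      have h3 : (0:ℝ) ≤ dist u (σ j) := dist_nonneg
      rw [hD0] at h2
      nlinarith
  · have hDpos : 0 < D := lt_of_le_of_ne dist_nonneg (Ne.symm hD0)
    -- right side: indices with t m ≤ t i, sorted increasingly by t
    set LR : List (Fin (n + 1)) :=
      (Finset.univ.filter (fun i => t m ≤ t i)).toList.mergeSort
        (fun a b => decide (t a ≤ t b)) with hLR
    set LL : List (Fin (n + 1)) :=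
      (Finset.univ.filter (fun i => t i ≤ t m)).toList.mergeSort
        (fun a b => decide (t b ≤ t a)) with hLL
    have hLRmem : ∀ i, i ∈ LR ↔ t m ≤ t i := by
      intro i
      rw [hLR, List.mem_mergeSort, Finset.mem_toList, Finset.mem_filter]
      simp
    have hLLmem : ∀ i, i ∈ LL ↔ t i ≤ t m := by
      intro i
      rw [hLL, List.mem_mergeSort, Finset.mem_toList, Finset.mem_filter]
      simp
    have hLRsort : LR.Pairwise (fun a b => t a ≤ t b) := by
      have := List.pairwise_mergeSort (le := fun a b : Fin (n+1) => decide (t a ≤ t b))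
        (fun a b c hab hbc => by
          simp only [decide_eq_true_eq] at *; linarith)
        (fun a b => by
          simp only [Bool.or_eq_true, decide_eq_true_eq]; exact le_total _ _)
        (Finset.univ.filter (fun i => t m ≤ t i)).toList
      refine this.imp ?_
      intro a b h; simpa using h
    have hLLsort : LL.Pairwise (fun a b => t b ≤ t a) := by
      have := List.pairwise_mergeSort (le := fun a b : Fin (n+1) => decide (t b ≤ t a))
        (fun a b c hab hbc => by
          simp only [decide_eq_true_eq] at *; linarith)
        (fun a b => by
          simp only [Bool.or_eq_true, decide_eq_true_eq]; exact le_total _ _)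
        (Finset.univ.filter (fun i => t i ≤ t m)).toList
      refine this.imp ?_
      intro a b h; simpa using h
    set AR := greedyAnchors covers m LR with hAR
    set AL := greedyAnchors covers m LL with hAL
    -- counting
    have hcountR : ε * D * AR.length ≤ 2 * D := by
      have := greedyAnchors_count σ t hσ u ε hε m hmin LR m
        (fun x hx => (hLRmem x).mp hx) hLRsort
      rw [← hAR] at this
      linarith [this]
    have hcountL : ε * D * AL.length ≤ 2 * D := by
      have hσ' : ∀ i j, dist (σ i) (σ j) = |(-t i) - (-t j)| := by
        intro i j
        rw [hσ i j, ← abs_neg]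
        ring_nf
      have := greedyAnchors_count σ (fun i => -t i) hσ' u ε hε m hmin LL m
        (fun x hx => by simpa using (hLLmem x).mp hx)
        (by refine hLLsort.imp ?_; intro a b h; simpa using h)
      rw [← hAL] at this
      linarith [this]
    have hlenR : (AR.length : ℝ) ≤ 2 / ε := by
      rw [le_div_iff₀ hε]
      nlinarith
    have hlenL : (AL.length : ℝ) ≤ 2 / ε := by
      rw [le_div_iff₀ hε]
      nlinarith
    refine ⟨insert m (AR.toFinset ∪ AL.toFinset), ?_, ?_⟩
    · have hcard : (insert m (AR.toFinset ∪ AL.toFinset)).card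
          ≤ 1 + (AR.length + AL.length) := by
        calc (insert m (AR.toFinset ∪ AL.toFinset)).card
            ≤ (AR.toFinset ∪ AL.toFinset).card + 1 := Finset.card_insert_le _ _
          _ ≤ (AR.toFinset.card + AL.toFinset.card) + 1 := by
              exact add_le_add_left (Finset.card_union_le _ _) 1
          _ ≤ (AR.length + AL.length) + 1 := by
              exact add_le_add_left
                (add_le_add (AR.toFinset_card_le) (AL.toFinset_card_le)) 1
          _ = 1 + (AR.length + AL.length) := by ring
      calc ((insert m (AR.toFinset ∪ AL.toFinset)).card : ℝ)
          ≤ (1 + (AR.length + AL.length) : ℕ) := by exact_mod_cast hcard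
        _ = 1 + ((AR.length : ℝ) + AL.length) := by push_cast; ring
        _ ≤ 1 + (2 / ε + 2 / ε) := by linarith
        _ = 4 / ε + 1 := by ring
    · intro j
      refine ⟨fun i _ => dist_triangle _ _ _, ?_⟩
      rcases le_total (t m) (t j) with hj | hj
      · obtain ⟨a, ha, hcov⟩ := greedyAnchors_cover covers hself LR m j
          ((hLRmem j).mpr hj)
        refine ⟨a, ?_, hcov⟩
        rcases ha with rfl | ha
        · exact Finset.mem_insert_self _ _
        · exact Finset.mem_insert_of_mem
            (Finset.mem_union_left _ (List.mem_toFinset.mpr ha))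
      · obtain ⟨a, ha, hcov⟩ := greedyAnchors_cover covers hself LL m j
          ((hLLmem j).mpr hj)
        refine ⟨a, ?_, hcov⟩
        rcases ha with rfl | ha
        · exact Finset.mem_insert_self _ _
        · exact Finset.mem_insert_of_mem
            (Finset.mem_union_right _ (List.mem_toFinset.mpr ha))
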